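/- Suppose that for each index i ∈ {1, …, r} there exists q_i ∈ Q with τ_i(q_i) > 0 and τ_j(q_i) = 0 for all j ≠ i (i.e., Q^sat is simplicial modulo its units). Then there exists a ∈ Q such that a + ℰ ⊆ Q, where ℰ is the essential set of Q. -/

import Mathlib

/-- The shift `α + S = {α + s : s ∈ S}` of a set `S ⊆ ℤ^d` by `α ∈ ℤ^d`. -/
def shiftSet {d : ℕ} (α : Fin d → ℤ) (S : Set (Fin d → ℤ)) : Set (Fin d → ℤ) :=
  (α + ·) '' S

/-- An essential point for `Q` is an `ε ∈ ℤ^d` such that whenever `a ∈ Q` satisfies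
`(a + ε + Q) ∩ Q = (ε + Q) ∩ Q`, `a` is a unit of `Q` (i.e. `-a ∈ Q`). -/
def essentialPoint {d : ℕ} (Q : AddSubmonoid (Fin d → ℤ)) (ε : Fin d → ℤ) : Prop :=
  ∀ a ∈ Q, shiftSet (a + ε) (Q : Set (Fin d → ℤ)) ∩ (Q : Set (Fin d → ℤ)) =
      shiftSet ε (Q : Set (Fin d → ℤ)) ∩ (Q : Set (Fin d → ℤ)) → -a ∈ Q

/-- The essential set `ℰ` of `Q`: the `Q`-set generated by the essential points. -/
def essentialSet {d : ℕ} (Q : AddSubmonoid (Fin d → ℤ)) : Set (Fin d → ℤ) :=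
  {x | ∃ ε q, essentialPoint Q ε ∧ q ∈ Q ∧ x = ε + q}

/-- The saturation `Q^sat = {x ∈ ℤ^d : n • x ∈ Q for some integer n ≥ 1}`. -/
def saturationOf {d : ℕ} (Q : AddSubmonoid (Fin d → ℤ)) : Set (Fin d → ℤ) :=
  {x | ∃ n : ℕ, 1 ≤ n ∧ n • x ∈ Q}

/-- Suppose that for each `i` there exists `q_i ∈ Q` with `τ_i(q_i) > 0` and
`τ_j(q_i) = 0` for all `j ≠ i` (i.e. `Q^sat` is simplicial modulo its units).  Then
there exists `a ∈ Q` such that `a + ℰ ⊆ Q`, where `ℰ` is the essential set of `Q`. -/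
theorem stmt14 {d r : ℕ} (Q : AddSubmonoid (Fin d → ℤ)) (hFG : Q.FG)
    (hgp : AddSubgroup.closure (Q : Set (Fin d → ℤ)) = ⊤)
    (τ : Fin r → ((Fin d → ℤ) →+ ℤ))
    (hτQ : ∀ i, ∀ x ∈ Q, 0 ≤ τ i x)
    (hsat : saturationOf Q = {x : Fin d → ℤ | ∀ i, 0 ≤ τ i x})
    (hsimp : ∀ i : Fin r, ∃ q ∈ Q, 0 < τ i q ∧ ∀ j, j ≠ i → τ j q = 0) :
    ∃ a ∈ Q, ∀ x ∈ essentialSet Q, a + x ∈ Q := by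
  classical
  obtain ⟨G, hG⟩ := hFG
  have hGQ : ∀ g ∈ G, g ∈ Q := fun g hg => by
    rw [← hG]; exact AddSubmonoid.subset_closure hg
  -- every element of Q is an ℕ-combination of the generators
  have hrep : ∀ p ∈ Q, ∃ c : (Fin d → ℤ) → ℕ, p = ∑ g ∈ G, c g • g := by
    intro p hp
    let Q' : AddSubmonoid (Fin d → ℤ) :=
      { carrier := {x | ∃ c : (Fin d → ℤ) → ℕ, x = ∑ g ∈ G, c g • g}
        zero_mem' := ⟨fun _ => 0, by simp⟩
        add_mem' := by
          rintro x y ⟨cx, rfl⟩ ⟨cy, rfl⟩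
          refine ⟨cx + cy, ?_⟩
          rw [← Finset.sum_add_distrib]
          exact Finset.sum_congr rfl (fun g _ => by rw [Pi.add_apply, add_nsmul]) }
    have hsub : Q ≤ Q' := by
      rw [← hG]
      refine AddSubmonoid.closure_le.mpr ?_
      intro g hg
      refine ⟨fun x => if x = g then 1 else 0, ?_⟩
      have h1 : ∑ g' ∈ G, (if g' = g then (1 : ℕ) else 0) • g'
          = ∑ g' ∈ G, (if g' = g then g' else 0) :=
        Finset.sum_congr rfl (fun x _ => by split_ifs <;> simp)
      rw [h1, Finset.sum_ite_eq' G g (fun x => x), if_pos (Finset.mem_coe.mp hg)]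
    exact hsub hp
  -- every element of ℤ^d is a difference of elements of Q
  have hdiff : ∀ x : Fin d → ℤ, ∃ w ∈ Q, ∃ p ∈ Q, x = w - p := by
    intro x
    let H : AddSubgroup (Fin d → ℤ) :=
      { carrier := {x | ∃ w ∈ Q, ∃ p ∈ Q, x = w - p}
        zero_mem' := ⟨0, zero_mem Q, 0, zero_mem Q, by simp⟩
        add_mem' := by
          rintro a b ⟨wa, hwa, pa, hpa, rfl⟩ ⟨wb, hwb, pb, hpb, rfl⟩
          exact ⟨wa + wb, add_mem hwa hwb, pa + pb, add_mem hpa hpb, by abel⟩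
        neg_mem' := by
          rintro a ⟨w, hw, p, hp, rfl⟩
          exact ⟨p, hp, w, hw, by abel⟩ }
    have hle : AddSubgroup.closure (Q : Set (Fin d → ℤ)) ≤ H :=
      (AddSubgroup.closure_le H).mpr (fun q hq => ⟨q, hq, 0, zero_mem Q, by simp⟩)
    exact hle (by rw [hgp]; trivial)
  -- the simplicial generators
  choose qi hqiQ hqipos hqizero using hsimp
  -- for each i and each g ∈ Q with τ i g > 0 there is M with M • g - qi i ∈ Q
  have hMex : ∀ (i : Fin r) (g : Fin d → ℤ), g ∈ Q → 0 < τ i g →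
      ∃ M : ℕ, (M • g - qi i) ∈ Q := by
    intro i g hg ht
    set m : ℕ := (τ i (qi i)).toNat with hm
    have hmz : (m : ℤ) = τ i (qi i) := Int.toNat_of_nonneg (le_of_lt (hqipos i))
    have hsatmem : m • g - qi i ∈ saturationOf Q := by
      rw [hsat]
      intro j
      rw [map_sub, map_nsmul, nsmul_eq_mul]
      by_cases hji : j = i
      · subst hji
        have h1 : (1 : ℤ) ≤ τ j g := ht
        nlinarith [hmz]
      · have h0 : τ j (qi i) = 0 := hqizero i j hji
        have h1 : 0 ≤ τ j g := hτQ j g hg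
        rw [h0, sub_zero]
        positivity
    obtain ⟨n, hn1, hnQ⟩ := hsatmem
    obtain ⟨k, rfl⟩ : ∃ k, n = k + 1 := ⟨n - 1, by omega⟩
    refine ⟨(k + 1) * m, ?_⟩
    have heq : ((k + 1) * m) • g - qi i = (k + 1) • (m • g - qi i) + k • qi i := by
      rw [smul_sub, smul_smul, succ_nsmul (qi i) k]
      abel
    rw [heq]
    exact add_mem hnQ (AddSubmonoid.nsmul_mem Q (hqiQ i) k)
  -- choose M
  have hMex' : ∀ (i : Fin r) (g : Fin d → ℤ),
      ∃ M : ℕ, (g ∈ Q → 0 < τ i g → (M • g - qi i) ∈ Q) := by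
    intro i g
    by_cases h : g ∈ Q ∧ 0 < τ i g
    · obtain ⟨M, hM⟩ := hMex i g h.1 h.2
      exact ⟨M, fun _ _ => hM⟩
    · exact ⟨0, fun h1 h2 => absurd ⟨h1, h2⟩ h⟩
  choose M hM using hMex'
  -- the bound C i
  set C : Fin r → ℤ := fun i => ∑ g ∈ G, (M i g : ℤ) * τ i g with hC
  have hC0 : ∀ i, 0 ≤ C i := by
    intro i
    refine Finset.sum_nonneg (fun g hg => ?_)
    have := hτQ i g (hGQ g hg)
    positivity
  -- Lemma E': deep elements of Q in direction i are in qi i + Q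
  have hE : ∀ i : Fin r, ∀ p ∈ Q, C i < τ i p → p - qi i ∈ Q := by
    intro i p hp hlt
    obtain ⟨c, rfl⟩ := hrep p hp
    have hτsum : τ i (∑ g ∈ G, c g • g) = ∑ g ∈ G, (c g : ℤ) * τ i g := by
      rw [map_sum]
      exact Finset.sum_congr rfl (fun g _ => by rw [map_nsmul, nsmul_eq_mul])
    rw [hτsum] at hlt
    obtain ⟨g, hgG, hlt2⟩ := Finset.exists_lt_of_sum_lt hlt
    have hτg : 0 < τ i g := by
      rcases lt_or_eq_of_le (hτQ i g (hGQ g hgG)) with h | h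
      · exact h
      · rw [← h] at hlt2; simp at hlt2
    have hMg : M i g ≤ c g := by
      have := (mul_lt_mul_iff_left₀ hτg).mp hlt2
      exact_mod_cast this.le
    have h1 : ∑ g' ∈ G, c g' • g'
        = (M i g) • g + ((c g - M i g) • g + ∑ g' ∈ G.erase g, c g' • g') := by
      rw [← Finset.add_sum_erase G _ hgG]
      rw [show c g • g = (M i g) • g + (c g - M i g) • g by
        rw [← add_nsmul, Nat.add_sub_cancel' hMg]]
      rw [add_assoc]
    rw [h1, show (M i g) • g + ((c g - M i g) • g + ∑ g' ∈ G.erase g, c g' • g') - qi i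
        = ((M i g) • g - qi i) + ((c g - M i g) • g + ∑ g' ∈ G.erase g, c g' • g') by abel]
    refine add_mem (hM i g (hGQ g hgG) hτg) (add_mem ?_ ?_)
    · exact AddSubmonoid.nsmul_mem Q (hGQ g hgG) _
    · exact AddSubmonoid.sum_mem Q
        (fun g' hg' => AddSubmonoid.nsmul_mem Q (hGQ g' (Finset.mem_of_mem_erase hg')) _)
  -- KEY LEMMA: essential points are bounded below
  have hkey : ∀ ε, essentialPoint Q ε → ∀ i, -(C i) ≤ τ i ε := by
    intro ε hε i
    by_contra hcon
    push_neg at hcon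
    have hne : -(qi i) ∉ Q := by
      intro hn
      have h0 := hτQ i _ hn
      rw [map_neg] at h0
      linarith [hqipos i]
    apply hne
    apply hε (qi i) (hqiQ i)
    ext x
    simp only [Set.mem_inter_iff, shiftSet, Set.mem_image, SetLike.mem_coe]
    constructor
    · rintro ⟨⟨s, hs, rfl⟩, hx⟩
      exact ⟨⟨qi i + s, add_mem (hqiQ i) hs, by abel⟩, hx⟩
    · rintro ⟨⟨p, hp, rfl⟩, hx⟩
      have hτp : C i < τ i p := by
        have h0 : 0 ≤ τ i (ε + p) := hτQ i _ hx
        rw [map_add] at h0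
        linarith
      exact ⟨⟨p - qi i, hE i p hp hτp, by abel⟩, hx⟩
  -- the saturation is covered by finitely many Q-translates
  have hcov : ∃ T : Finset (Fin d → ℤ),
      ∀ x ∈ saturationOf Q, ∃ t ∈ T, ∃ u ∈ Q, x = t + u := by
    refine ⟨Fintype.piFinset (fun j => Finset.Icc (-(∑ g ∈ G, |g j|)) (∑ g ∈ G, |g j|)), ?_⟩
    rintro x ⟨n, hn1, hnx⟩
    obtain ⟨c, hc⟩ := hrep (n • x) hnx
    set u : Fin d → ℤ := ∑ g ∈ G, (c g / n) • g with hu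
    have huQ : u ∈ Q :=
      AddSubmonoid.sum_mem Q (fun g hg => AddSubmonoid.nsmul_mem Q (hGQ g hg) _)
    refine ⟨x - u, ?_, u, huQ, by abel⟩
    rw [Fintype.mem_piFinset]
    intro j
    rw [Finset.mem_Icc, ← abs_le]
    have key : n • (x - u) = ∑ g ∈ G, (c g % n) • g := by
      rw [smul_sub, hc, hu, Finset.smul_sum]
      rw [← Finset.sum_sub_distrib]
      refine Finset.sum_congr rfl (fun g _ => ?_)
      rw [smul_smul, sub_eq_iff_eq_add, ← add_nsmul, Nat.mod_add_div]
    have hj : (n : ℤ) * ((x - u) j) = ∑ g ∈ G, ((c g % n : ℕ) : ℤ) * g j := by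
      simpa [Pi.smul_apply, Finset.sum_apply, nsmul_eq_mul] using congrFun key j
    have hb : |(n : ℤ) * ((x - u) j)| ≤ (n : ℤ) * (∑ g ∈ G, |g j|) := by
      rw [hj]
      calc |∑ g ∈ G, ((c g % n : ℕ) : ℤ) * g j| ≤ ∑ g ∈ G, |((c g % n : ℕ) : ℤ) * g j| :=
            Finset.abs_sum_le_sum_abs _ _
        _ ≤ ∑ g ∈ G, (n : ℤ) * |g j| := by
            refine Finset.sum_le_sum (fun g _ => ?_)
            have hn0' : 0 < n := hn1
            have hlt : (((c g % n : ℕ) : ℤ)) ≤ (n : ℤ) := by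
              exact_mod_cast (Nat.mod_lt (c g) hn0').le
            calc |((c g % n : ℕ) : ℤ) * g j|
                = ((c g % n : ℕ) : ℤ) * |g j| := by
                  rw [abs_mul, abs_of_nonneg (Int.natCast_nonneg _)]
              _ ≤ (n : ℤ) * |g j| := mul_le_mul_of_nonneg_right hlt (abs_nonneg _)
        _ = (n : ℤ) * (∑ g ∈ G, |g j|) := (Finset.mul_sum _ _ _).symm
    have hn0 : (0 : ℤ) < n := by exact_mod_cast hn1
    rw [abs_mul, abs_of_nonneg hn0.le] at hb
    exact le_of_mul_le_mul_left hb hn0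
  obtain ⟨T, hT⟩ := hcov
  choose w hwQ p hpQ hwp using hdiff
  set K : ℕ := (∑ i, C i).toNat with hK
  have hKC : ∀ i, C i ≤ (K : ℤ) := by
    intro i
    have h1 : C i ≤ ∑ i', C i' :=
      Finset.single_le_sum (fun i' _ => hC0 i') (Finset.mem_univ i)
    exact h1.trans (Int.self_le_toNat _)
  set σ : Fin d → ℤ := ∑ i, qi i with hσ
  have hσQ : σ ∈ Q := AddSubmonoid.sum_mem Q (fun i _ => hqiQ i)
  have hσpos : ∀ i, 1 ≤ τ i σ := by
    intro i
    rw [hσ, map_sum]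
    calc (1 : ℤ) ≤ τ i (qi i) := hqipos i
      _ ≤ ∑ i', τ i (qi i') :=
        Finset.single_le_sum (fun i' _ => hτQ i _ (hqiQ i')) (Finset.mem_univ i)
  set a₀ : Fin d → ℤ := ∑ t ∈ T, p t with ha₀def
  have ha₀ : a₀ ∈ Q := AddSubmonoid.sum_mem Q (fun t _ => hpQ t)
  refine ⟨a₀ + K • σ, add_mem ha₀ (AddSubmonoid.nsmul_mem Q hσQ K), ?_⟩
  rintro x ⟨ε, q, hεp, hq, rfl⟩
  have hsatx : (ε + q) + K • σ ∈ saturationOf Q := by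
    rw [hsat]
    intro i
    have h1 := hkey ε hεp i
    have h2 := hτQ i q hq
    have h3 : (C i : ℤ) ≤ (K : ℤ) * τ i σ := by
      have hKnn : (0 : ℤ) ≤ (K : ℤ) := Int.natCast_nonneg K
      calc C i ≤ (K : ℤ) := hKC i
        _ = (K : ℤ) * 1 := (mul_one _).symm
        _ ≤ (K : ℤ) * τ i σ := mul_le_mul_of_nonneg_left (hσpos i) hKnn
    have h4 : τ i ((ε + q) + K • σ) = τ i ε + τ i q + (K : ℤ) * τ i σ := by
      rw [map_add, map_add, map_nsmul, nsmul_eq_mul]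
    rw [h4]
    linarith
  obtain ⟨t, htT, u, huQ, hxu⟩ := hT _ hsatx
  have hfin : a₀ + K • σ + (ε + q) = (∑ t' ∈ T.erase t, p t') + (w t + u) := by
    have h1 : p t + ∑ t' ∈ T.erase t, p t' = a₀ := Finset.add_sum_erase T p htT
    have h3 : t = w t - p t := hwp t
    have h2 : (ε + q) + K • σ = t + u := hxu
    rw [h3] at h2
    rw [← h1]
    rw [show p t + ∑ t' ∈ T.erase t, p t' + K • σ + (ε + q)
        = (∑ t' ∈ T.erase t, p t') + (p t + ((ε + q) + K • σ)) by abel, h2]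
    abel
  rw [hfin]
  exact add_mem (AddSubmonoid.sum_mem Q (fun t' ht' => hpQ t')) (add_mem (hwQ t) huQ)
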